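/- Let Γ̄ be an orbifold group, ρ̄: Γ̄ → Homeo(S¹) a (μ,τ,σ)-representation, and I₀ a periodic gap whose stabilizer is the cyclic subgroup generated by a boundary generator c_i. Let f₀ and g₀ be homeomorphisms of the closure of I₀ coinciding with ρ̄(c_i) on ∂I₀, and suppose there is a continuous, surjective, weakly monotone, orientation-preserving map φ₀: I₀ → I₀ with g₀∘φ₀ = φ₀∘f₀ on I₀ (a semi-conjugacy from f₀ to g₀). Let ρ̄′₁ be a modification of ρ̄ on I₀ by f₀ and ρ̄′₂ a modification of ρ̄ on I₀ by g₀. Then φ₀ extends to a continuous, surjective, weakly monotone degree-one map φ: S¹ → S¹, equal to the identity on S¹ ∖ 𝔍, which is a semi-conjugacy from ρ̄′₁ to ρ̄′₂: φ∘ρ̄′₁(γ̄) = ρ̄′₂(γ̄)∘φ for every γ̄ ∈ Γ̄. -/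

import Mathlib

open Set Filter Topology
open scoped commutatorElement

noncomputable section

namespace PAFlow

/-- The circle, realized as `ℝ / ℤ`. -/
abbrev S1 : Type := AddCircle (1 : ℝ)

instance {α : Type*} [TopologicalSpace α] : Group (α ≃ₜ α) where
  mul f g := g.trans f
  one := Homeomorph.refl α
  inv := Homeomorph.symm
  mul_assoc f g h := Homeomorph.ext fun _ => rfl
  one_mul f := Homeomorph.ext fun _ => rfl
  mul_one f := Homeomorph.ext fun _ => rfl
  inv_mul_cancel f := Homeomorph.ext fun x => f.symm_apply_apply x

/-- The canonical representative in `[0,1)` of a point of the circle. -/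
noncomputable def pos1 (x : S1) : ℝ := (AddCircle.equivIco 1 0 x : ℝ)

/-- The open positively-oriented arc from `a` to `c`; when `a = c` it is the complement
of `{a}` (full circle minus the point). -/
def oArc (a c : S1) : Set S1 :=
  if a = c then {a}ᶜ else {b : S1 | 0 < pos1 (b - a) ∧ pos1 (b - a) < pos1 (c - a)}

/-- The closed positively-oriented arc from `a` to `c`; when `a = c` it is the whole circle. -/
def cArc (a c : S1) : Set S1 :=
  if a = c then Set.univ else {b : S1 | pos1 (b - a) ≤ pos1 (c - a)}

/-- A homeomorphism of the circle preserves orientation if it preserves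
(strict) positively-oriented arcs. -/
def OrientPres (f : S1 ≃ₜ S1) : Prop :=
  ∀ a b c : S1, b ∈ oArc a c → f b ∈ oArc (f a) (f c)

/-- A homeomorphism of the circle reverses orientation if it reverses
(strict) positively-oriented arcs. -/
def OrientRev (f : S1 ≃ₜ S1) : Prop :=
  ∀ a b c : S1, b ∈ oArc a c → f b ∈ oArc (f c) (f a)

/-- A gap of `μ` is a connected component of the complement of `μ`. -/
def IsGap (μ : Set S1) (I : Set S1) : Prop :=
  ∃ x ∈ μᶜ, I = connectedComponentIn μᶜ x

/-- The type of gaps of `μ`. -/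
abbrev Gap (μ : Set S1) : Type := {I : Set S1 // IsGap μ I}

/-- The data of the finite-order homeomorphism `τ : μ → μ`, of order `k`, fixed point free,
preserving the cyclic order, and such that the closed arcs `[τ^[i] x, τ^[i+1] x]` cover the
circle while the corresponding open arcs are pairwise disjoint. -/
structure TauData (μ : Set S1) (k : ℕ) : Type where
  τ : S1 → S1
  k_pos : 0 < k
  mapsTo : Set.MapsTo τ μ μ
  bijOn : Set.BijOn τ μ μ
  contOn : ContinuousOn τ μ
  fixfree : ∀ x ∈ μ, τ x ≠ x
  order_k : ∀ x ∈ μ, τ^[k] x = x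
  ordPres : ∀ x ∈ μ, ∀ y ∈ μ, ∀ z ∈ μ, y ∈ oArc x z → τ y ∈ oArc (τ x) (τ z)
  arcCover : ∀ x ∈ μ, (⋃ i ∈ Finset.range k, cArc (τ^[i] x) (τ^[i + 1] x)) = Set.univ
  arcDisj : ∀ x ∈ μ, ∀ i < k, ∀ j < k, i ≠ j →
    Disjoint (oArc (τ^[i] x) (τ^[i + 1] x)) (oArc (τ^[j] x) (τ^[j + 1] x))

/-- `ρ` is a `(μ,τ,σ)`-representation. -/
structure IsMTSRep {Γ : Type*} [Group Γ] (ρ : Γ →* (S1 ≃ₜ S1)) (μ : Set S1) (k : ℕ)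
    (T : TauData μ k) (σg : Γ →* Equiv.Perm (Gap μ)) : Prop where
  perfect : Perfect μ
  nonempty : μ.Nonempty
  invariant : ∀ γ : Γ, (ρ γ) '' μ = μ
  minimal : ∀ ν : Set S1, ν.Nonempty → IsClosed ν → (∀ γ : Γ, (ρ γ) '' ν ⊆ ν) → μ ⊆ ν
  orient : ∀ γ : Γ, OrientPres (ρ γ) ∨ OrientRev (ρ γ)
  commPres : ∀ γ : Γ, OrientPres (ρ γ) → ∀ x ∈ μ, ρ γ (T.τ x) = T.τ (ρ γ x)
  commRev : ∀ γ : Γ, OrientRev (ρ γ) → ∀ x ∈ μ, ρ γ (T.τ x) = (T.τ)^[k - 1] (ρ γ x)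
  gapAct : ∀ (γ : Γ) (I : Gap μ), ((σg γ I : Gap μ) : Set S1) = (ρ γ) '' (I : Set S1)

/-- The stabilizer in `Γ` of a gap `I`, for the action `σg` on gaps. -/
def gapStab {Γ : Type*} [Group Γ] {μ : Set S1} (σg : Γ →* Equiv.Perm (Gap μ)) (I : Gap μ) :
    Subgroup Γ where
  carrier := {γ : Γ | σg γ I = I}
  one_mem' := by simp
  mul_mem' := by
    intro x y hx hy
    have hx' : σg x I = I := hx
    have hy' : σg y I = I := hy
    show σg (x * y) I = I
    rw [map_mul, Equiv.Perm.mul_apply, hy', hx']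
  inv_mem' := by
    intro x hx
    have hx' : σg x I = I := hx
    show σg x⁻¹ I = I
    have h : σg x⁻¹ (σg x I) = I := by
      rw [← Equiv.Perm.mul_apply, ← map_mul]; simp
    rw [hx'] at h
    exact h

/-- The union `𝔍` of all the iterates of the gap `I₀`. -/
def gapOrbit {Γ : Type*} [Group Γ] {μ : Set S1} (σg : Γ →* Equiv.Perm (Gap μ))
    (I₀ : Gap μ) : Set S1 :=
  ⋃ γ : Γ, ((σg γ I₀ : Gap μ) : Set S1)

/-- `f` restricts to a homeomorphism of the closure of `I` (the closure being compact,
a continuous bijection of it is automatically a homeomorphism). -/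
def IsClosureHomeo (f : S1 → S1) (I : Set S1) : Prop :=
  ContinuousOn f (closure I) ∧ Set.BijOn f (closure I) (closure I)

/-- `ρ'` is a modification of `ρ` on the gap `I₀` by `f₀` (with respect to the
distinguished element `ci` generating the stabilizer of `I₀`). -/
structure IsModification {Γ : Type*} [Group Γ] (ρ ρ' : Γ →* (S1 ≃ₜ S1)) (μ : Set S1) (k : ℕ)
    (T : TauData μ k) (σg : Γ →* Equiv.Perm (Gap μ)) (I₀ : Gap μ) (ci : Γ)
    (f₀ : S1 → S1) : Prop where
  rep' : IsMTSRep ρ' μ k T σg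
  eq_off : ∀ (γ : Γ) (x : S1), x ∉ gapOrbit σg I₀ → ρ' γ x = ρ γ x
  on_gap : ∀ x ∈ (I₀ : Set S1), ρ' ci x = f₀ x

/-- The (finite) `τ`-orbit of a point. -/
def tauOrbit {μ : Set S1} {k : ℕ} (T : TauData μ k) (x : S1) : Set S1 :=
  {y : S1 | ∃ j < k, (T.τ)^[j] x = y}

/-- The limiting behaviour required of a subsequence in the (k)-convergence property:
there are two `τ`-orbits (of points `xm`, `xp` of `μ`) such that on each compact subset of
the open arc `]τ^[i] xm, τ^[i+1] xm[` the sequence converges uniformly to `τ^[i] xp`. -/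
def KConvSeq (F : ℕ → (S1 ≃ₜ S1)) (μ : Set S1) (k : ℕ) (τ : S1 → S1) : Prop :=
  ∃ xm ∈ μ, ∃ xp ∈ μ, ∀ i < k, ∀ K : Set S1,
    K ⊆ oArc (τ^[i] xm) (τ^[i + 1] xm) → IsCompact K →
      TendstoUniformlyOn (fun n x => (F n) x) (fun _ => τ^[i] xp) atTop K

/-- The (discrete) (k)-convergence property. -/
def HasKConv {Γ : Type*} [Group Γ] (ρ : Γ →* (S1 ≃ₜ S1)) (μ : Set S1) (k : ℕ)
    (τ : S1 → S1) : Prop :=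
  ∀ γs : ℕ → Γ, ∃ φ : ℕ → ℕ, StrictMono φ ∧
    ((∀ m n : ℕ, ρ (γs (φ m)) = ρ (γs (φ n))) ∨
      KConvSeq (fun n => ρ (γs (φ n))) μ k τ)

/-- The almost (k)-convergence property. -/
def HasAlmostKConv {Γ : Type*} [Group Γ] (ρ : Γ →* (S1 ≃ₜ S1)) (μ : Set S1) (k : ℕ)
    (τ : S1 → S1) (σg : Γ →* Equiv.Perm (Gap μ)) : Prop :=
  ∀ γs : ℕ → Γ, ∃ φ : ℕ → ℕ, StrictMono φ ∧
    ((∀ m n : ℕ, ρ (γs (φ m)) = ρ (γs (φ n))) ∨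
      (∃ a γ : Γ, (∃ I : Gap μ, σg γ I = I) ∧
        ∃ p : ℕ → ℤ, ∀ n : ℕ, ρ (γs (φ n)) = ρ (γ ^ (p n) * a)) ∨
      KConvSeq (fun n => ρ (γs (φ n))) μ k τ)

/-- `x` is a topologically attracting fixed point of `f`. -/
def TopAttracting (f : S1 → S1) (x : S1) : Prop :=
  f x = x ∧ ∃ U ∈ 𝓝 x, TendstoUniformlyOn (fun n y => f^[n] y) (fun _ => x) atTop U

/-- `x` is a topologically hyperbolic (attracting or repelling) fixed point of the
homeomorphism `f`. -/
def HypFixed (f : S1 ≃ₜ S1) (x : S1) : Prop :=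
  TopAttracting f x ∨ TopAttracting f.symm x

/-- `x` is a topologically attracting fixed point of `f` within the set `s`. -/
def TopAttractingOn (f : S1 → S1) (s : Set S1) (x : S1) : Prop :=
  f x = x ∧ ∃ U ∈ 𝓝[s] x, TendstoUniformlyOn (fun n y => f^[n] y) (fun _ => x) atTop U

/-- `ρ` is `μ`-faithful. -/
def MuFaithful {Γ : Type*} [Group Γ] (ρ : Γ →* (S1 ≃ₜ S1)) (μ : Set S1) : Prop :=
  ∀ γ : Γ, (∀ x ∈ μ, ρ γ x = x) → γ = 1

/-- `ρ` is non-elementary: it has no finite orbit in the circle. -/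
def NonElementary {Γ : Type*} [Group Γ] (ρ : Γ →* (S1 ≃ₜ S1)) : Prop :=
  ∀ x : S1, ¬ (Set.range fun γ : Γ => ρ γ x).Finite

/-- A presentation of a group `Γ` as the fundamental group of a compact 2-orbifold with
nonempty boundary:  generators `a i`, `b i` (handles, or crosscaps when non-orientable, in
which case the `b i` are trivial), torsion generators `d j` of orders `α j ≥ 2`, and
boundary generators `c i`, `q ≥ 1`, subject to the defining relations; being a presentation
is expressed by the universal lifting property. -/
structure OrbifoldPresentation (Γ : Type*) [Group Γ] : Type _ where
  orientable : Bool
  g : ℕ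
  p : ℕ
  q : ℕ
  a : Fin g → Γ
  b : Fin g → Γ
  d : Fin p → Γ
  c : Fin q → Γ
  α : Fin p → ℕ
  q_pos : 1 ≤ q
  α_two : ∀ j, 2 ≤ α j
  b_trivial : orientable = false → ∀ i, b i = 1
  rel_d : ∀ j, d j ^ (α j) = 1
  rel_long : (List.ofFn c).prod =
    (if orientable then (List.ofFn fun i => ⁅a i, b i⁆).prod
      else (List.ofFn fun i => (a i) ^ 2).prod) * (List.ofFn d).prod
  generates : Subgroup.closure
    (Set.range a ∪ Set.range b ∪ Set.range d ∪ Set.range c) = ⊤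
  liftUnique : ∀ (H : Type) (_ : Group H) (fa fb : Fin g → H) (fd : Fin p → H)
    (fc : Fin q → H),
    (orientable = false → ∀ i, fb i = 1) →
    (∀ j, fd j ^ (α j) = 1) →
    ((List.ofFn fc).prod =
      (if orientable then (List.ofFn fun i => ⁅fa i, fb i⁆).prod
        else (List.ofFn fun i => (fa i) ^ 2).prod) * (List.ofFn fd).prod) →
    ∃! φ : Γ →* H, (∀ i, φ (a i) = fa i) ∧ (∀ i, φ (b i) = fb i) ∧
      (∀ j, φ (d j) = fd j) ∧ (∀ i, φ (c i) = fc i)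


/-- `F : ℝ → ℝ` is a lift of the circle map `f` through the projection `ℝ → ℝ/ℤ`. -/
def IsLiftOf (F : ℝ → ℝ) (f : S1 → S1) : Prop :=
  ∀ x : ℝ, ((F x : ℝ) : S1) = f ((x : ℝ) : S1)

/-- Formal letters for words in the generators of an orbifold group presentation. -/
inductive OLetter (g p : ℕ) : Type
  | ga : Fin g → Bool → OLetter g p
  | gb : Fin g → Bool → OLetter g p
  | gd : Fin p → Bool → OLetter g p

/-- Evaluation of a letter in the group. -/
def evLetter {Γ : Type*} [Group Γ] (P : OrbifoldPresentation Γ) :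
    OLetter P.g P.p → Γ
  | .ga i bb => if bb then (P.a i)⁻¹ else P.a i
  | .gb i bb => if bb then (P.b i)⁻¹ else P.b i
  | .gd j bb => if bb then (P.d j)⁻¹ else P.d j

/-- Evaluation of a word (a list of letters), multiplying from left to right. -/
def evWord {Γ : Type*} [Group Γ] (P : OrbifoldPresentation Γ)
    (w : List (OLetter P.g P.p)) : Γ :=
  (w.map (evLetter P)).prod

/-- A word is admissible if, in the non-orientable case, it uses no `b`-letters. -/
def Admissible {Γ : Type*} [Group Γ] (P : OrbifoldPresentation Γ)
    (w : List (OLetter P.g P.p)) : Prop :=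
  P.orientable = false → ∀ l ∈ w, ∀ (i : Fin P.g) (bb : Bool), l ≠ OLetter.gb i bb

/-- The distinguished word `w₀` representing `c₁`:
`[a₁,b₁]⋯[a_g,b_g]d₁⋯d_p` in the orientable case, `a₁²⋯a_g²d₁⋯d_p` otherwise. -/
def w0 {Γ : Type*} [Group Γ] (P : OrbifoldPresentation Γ) : List (OLetter P.g P.p) :=
  (if P.orientable then
    (List.ofFn fun i : Fin P.g =>
      ([OLetter.ga i false, OLetter.gb i false, OLetter.ga i true, OLetter.gb i true] :
        List (OLetter P.g P.p))).flatten
   else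
    (List.ofFn fun i : Fin P.g =>
      ([OLetter.ga i false, OLetter.ga i false] : List (OLetter P.g P.p))).flatten)
  ++ (List.ofFn fun j : Fin P.p => OLetter.gd j false)

/-- The length `ℓ` of `w₀`. -/
def w0Len {Γ : Type*} [Group Γ] (P : OrbifoldPresentation Γ) : ℕ :=
  (if P.orientable then 4 * P.g else 2 * P.g) + P.p

/-- Iterated images `I_n` of the gap `I₀` under the successive elements of the list `l`:
`I_{n+1} = σ(l_n) I_n`. -/
def gapSeq {Γ : Type*} [Group Γ] {μ : Set S1} (σg : Γ →* Equiv.Perm (Gap μ))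
    (I₀ : Gap μ) (l : List Γ) : ℕ → Gap μ
  | 0 => I₀
  | n + 1 => σg (l.getD n 1) (gapSeq σg I₀ l n)

/-! ### Auxiliary lemmas for Statement 3 -/

section Stmt3Aux

/-- The projection `ℝ → S1`. -/
noncomputable abbrev prj (r : ℝ) : S1 := ((r : ℝ) : S1)

lemma pos1_coe (r : ℝ) : pos1 (prj r) = Int.fract r := by
  have h := AddCircle.coe_equivIco_mk_apply (p := (1:ℝ)) (x := r)
  simp only [div_one, mul_one] at h
  exact h

lemma coe_pos1 (x : S1) : prj (pos1 x) = x := by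
  exact (AddCircle.equivIco 1 0).symm_apply_apply x

lemma pos1_mem (x : S1) : pos1 x ∈ Set.Ico (0:ℝ) 1 := by
  have h := (AddCircle.equivIco 1 0 x).2
  simpa [pos1] using h

lemma pos1_nonneg (x : S1) : 0 ≤ pos1 x := (pos1_mem x).1

lemma pos1_lt_one (x : S1) : pos1 x < 1 := (pos1_mem x).2

lemma pos1_zero : pos1 (0 : S1) = 0 := by
  have : (0 : S1) = prj 0 := by norm_num
  rw [this, pos1_coe]; simp

lemma pos1_eq_zero_iff {x : S1} : pos1 x = 0 ↔ x = 0 := by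
  constructor
  · intro h
    have := coe_pos1 x
    rw [h] at this
    simpa using this.symm
  · rintro rfl; exact pos1_zero

lemma pos1_injective : Function.Injective pos1 := by
  intro x y h
  rw [← coe_pos1 x, ← coe_pos1 y, h]

lemma prj_sub (r s : ℝ) : prj (r - s) = prj r - prj s :=
  AddCircle.coe_sub 1 r s

lemma prj_add (r s : ℝ) : prj (r + s) = prj r + prj s :=
  AddCircle.coe_add 1 r s

lemma pos1_sub (x y : S1) : pos1 (x - y) = Int.fract (pos1 x - pos1 y) := by
  conv_lhs => rw [← coe_pos1 x, ← coe_pos1 y, ← prj_sub, pos1_coe]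

lemma pos1_sub_pos {x y : S1} (h : x ≠ y) : 0 < pos1 (x - y) := by
  rcases lt_or_eq_of_le (pos1_nonneg (x - y)) with h' | h'
  · exact h'
  · exact absurd (sub_eq_zero.mp (pos1_eq_zero_iff.mp h'.symm)) h

lemma fract_self_of_mem {r : ℝ} (h0 : 0 ≤ r) (h1 : r < 1) : Int.fract r = r :=
  Int.fract_eq_self.mpr ⟨h0, h1⟩

/-! arcs -/

lemma mem_cArc_iff {a c : S1} (h : a ≠ c) {b : S1} :
    b ∈ cArc a c ↔ pos1 (b - a) ≤ pos1 (c - a) := by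
  rw [cArc, if_neg h]; rfl

lemma mem_oArc_iff {a c : S1} (h : a ≠ c) {b : S1} :
    b ∈ oArc a c ↔ 0 < pos1 (b - a) ∧ pos1 (b - a) < pos1 (c - a) := by
  rw [oArc, if_neg h]; rfl

lemma cArc_self (a : S1) : cArc a a = Set.univ := by rw [cArc, if_pos rfl]

lemma left_mem_cArc (a c : S1) : a ∈ cArc a c := by
  rcases eq_or_ne a c with rfl | h
  · rw [cArc_self]; trivial
  · rw [mem_cArc_iff h, sub_self, pos1_zero]
    exact pos1_nonneg (c - a)

lemma right_mem_cArc (a c : S1) : c ∈ cArc a c := by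
  rcases eq_or_ne a c with rfl | h
  · rw [cArc_self]; trivial
  · rw [mem_cArc_iff h]

lemma sub_pos1_swap {a c : S1} (h : a ≠ c) :
    pos1 (a - c) = 1 - pos1 (c - a) := by
  have hca : c - a ≠ 0 := sub_ne_zero.mpr (Ne.symm h)
  have h1 : pos1 (a - c) = Int.fract (-(pos1 (c - a))) := by
    have : a - c = 0 - (c - a) := by abel
    rw [this, pos1_sub, pos1_zero, zero_sub]
  rw [h1, Int.fract_neg, Int.fract_eq_self.mpr ⟨pos1_nonneg _, pos1_lt_one _⟩]
  · rw [Int.fract_eq_self.mpr ⟨pos1_nonneg _, pos1_lt_one _⟩]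
    exact fun h0 => hca (pos1_eq_zero_iff.mp h0)

/-- If `b` is "past" `c` (relative to base `a`) then `b ∈ oArc c a`. -/
lemma mem_oArc_swap {a b c : S1} (hac : a ≠ c)
    (h : pos1 (c - a) < pos1 (b - a)) : b ∈ oArc c a := by
  have hca : c ≠ a := Ne.symm hac
  set β := pos1 (b - a) with hβ
  set ζ := pos1 (c - a) with hζ
  have hbc : pos1 (b - c) = β - ζ := by
    have : b - c = (b - a) - (c - a) := by abel
    rw [this, pos1_sub, ← hβ, ← hζ, fract_self_of_mem (by linarith) (by
      have := pos1_lt_one (b - a); have := pos1_nonneg (c - a); linarith)]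
  rw [mem_oArc_iff hca, hbc, sub_pos1_swap hac, ← hζ]
  constructor
  · linarith
  · have := pos1_lt_one (b - a); linarith

lemma not_mem_oArc_both {a b c : S1} (hac : a ≠ c) :
    b ∈ oArc a c → b ∉ oArc c a := by
  intro h1 h2
  rw [mem_oArc_iff hac] at h1
  rw [mem_oArc_iff (Ne.symm hac)] at h2
  set β := pos1 (b - a) with hβ
  set ζ := pos1 (c - a) with hζ
  have hbc : pos1 (b - c) = Int.fract (β - ζ) := by
    have : b - c = (b - a) - (c - a) := by abel
    rw [this, pos1_sub, ← hβ, ← hζ]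
  have hζ1 : ζ < 1 := pos1_lt_one (c - a)
  have hfr : Int.fract (β - ζ) = β - ζ + 1 := by
    have : Int.fract (β - ζ + 1) = β - ζ + 1 :=
      fract_self_of_mem (by linarith [h1.1]) (by linarith [h1.2])
    rw [← Int.fract_add_one (β - ζ), this]
  rw [hbc, hfr, sub_pos1_swap hac, ← hζ] at h2
  linarith [h2.2, h1.1]

lemma oArc_trichotomy {a b c : S1} (hba : b ≠ a) (hbc : b ≠ c) (hac : a ≠ c) :
    b ∈ oArc a c ∨ b ∈ oArc c a := by
  rcases lt_trichotomy (pos1 (b - a)) (pos1 (c - a)) with h | h | h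
  · left; rw [mem_oArc_iff hac]; exact ⟨pos1_sub_pos hba, h⟩
  · exact absurd (sub_left_inj.mp (pos1_injective h)) hbc
  · right; exact mem_oArc_swap hac h

lemma mem_cArc_cases {a b c : S1} (hac : a ≠ c) (h : b ∈ cArc a c) :
    b = a ∨ b = c ∨ b ∈ oArc a c := by
  rw [mem_cArc_iff hac] at h
  rcases eq_or_ne b a with h1 | h1
  · exact Or.inl h1
  rcases eq_or_ne b c with h2 | h2
  · exact Or.inr (Or.inl h2)
  refine Or.inr (Or.inr ?_)
  rw [mem_oArc_iff hac]
  refine ⟨pos1_sub_pos h1, lt_of_le_of_ne h ?_⟩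
  exact fun he => h2 (sub_left_inj.mp (pos1_injective he))

lemma not_mem_cArc_of_swap {a b c : S1} (hac : a ≠ c) (h : b ∈ oArc c a) :
    b ∉ cArc a c := by
  intro hb
  rcases mem_cArc_cases hac hb with rfl | rfl | hb'
  · rw [mem_oArc_iff (Ne.symm hac)] at h
    exact absurd h.2 (lt_irrefl _)
  · rw [mem_oArc_iff (Ne.symm hac)] at h
    rw [sub_self, pos1_zero] at h
    exact absurd h.1 (lt_irrefl _)
  · exact not_mem_oArc_both hac hb' h

lemma oArc_subset_cArc {a c : S1} (hac : a ≠ c) : oArc a c ⊆ cArc a c := by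
  intro b hb
  rw [mem_oArc_iff hac] at hb
  rw [mem_cArc_iff hac]
  exact hb.2.le

/-! homeomorphism group plumbing -/

lemma homeo_mul_apply (f g : S1 ≃ₜ S1) (x : S1) : (f * g) x = f (g x) := rfl

lemma homeo_one_apply (x : S1) : (1 : S1 ≃ₜ S1) x = x := rfl

lemma rep_inv_apply {Γ : Type*} [Group Γ] (ρ : Γ →* (S1 ≃ₜ S1)) (γ : Γ) (x : S1) :
    ρ γ⁻¹ (ρ γ x) = x := by
  rw [← homeo_mul_apply, ← map_mul, inv_mul_cancel, map_one, homeo_one_apply]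

lemma rep_apply_inv {Γ : Type*} [Group Γ] (ρ : Γ →* (S1 ≃ₜ S1)) (γ : Γ) (x : S1) :
    ρ γ (ρ γ⁻¹ x) = x := by
  rw [← homeo_mul_apply, ← map_mul, mul_inv_cancel, map_one, homeo_one_apply]

lemma rep_image_image {Γ : Type*} [Group Γ] (ρ : Γ →* (S1 ≃ₜ S1)) (δ γ : Γ) (s : Set S1) :
    ρ δ '' (ρ γ '' s) = ρ (δ * γ) '' s := by
  rw [Set.image_image]
  apply Set.image_congr
  intro x _
  rw [map_mul, homeo_mul_apply]

/-! orientation transport -/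

lemma orientPres_cArc {f : S1 ≃ₜ S1} (hf : OrientPres f) {a b c : S1}
    (h : b ∈ cArc a c) : f b ∈ cArc (f a) (f c) := by
  rcases eq_or_ne a c with rfl | hac
  · rw [cArc_self]; trivial
  have hfac : f a ≠ f c := fun he => hac (f.injective he)
  rcases mem_cArc_cases hac h with rfl | rfl | h'
  · exact left_mem_cArc _ _
  · exact right_mem_cArc _ _
  · exact oArc_subset_cArc hfac (hf a b c h')

lemma orientRev_cArc {f : S1 ≃ₜ S1} (hf : OrientRev f) {a b c : S1}
    (h : b ∈ cArc a c) : f b ∈ cArc (f c) (f a) := by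
  rcases eq_or_ne a c with rfl | hac
  · rw [cArc_self]; trivial
  have hfac : f c ≠ f a := fun he => hac (f.injective he).symm
  rcases mem_cArc_cases hac h with rfl | rfl | h'
  · exact right_mem_cArc _ _
  · exact left_mem_cArc _ _
  · exact oArc_subset_cArc hfac (hf a b c h')

lemma orientPres_cArc_rev {f : S1 ≃ₜ S1} (hf : OrientPres f) {a b c : S1}
    (h : f b ∈ cArc (f a) (f c)) : b ∈ cArc a c := by
  rcases eq_or_ne a c with rfl | hac
  · rw [cArc_self]; trivial
  by_contra hb
  have hb' : b ∈ oArc c a := by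
    rcases eq_or_ne b a with rfl | h1
    · exact absurd (left_mem_cArc _ _) hb
    rcases eq_or_ne b c with rfl | h2
    · exact absurd (right_mem_cArc _ _) hb
    rcases oArc_trichotomy h1 h2 hac with h' | h'
    · exact absurd (oArc_subset_cArc hac h') hb
    · exact h'
  have := hf c b a hb'
  exact not_mem_cArc_of_swap (fun he => hac (f.injective he)) this h

lemma orientRev_cArc_rev {f : S1 ≃ₜ S1} (hf : OrientRev f) {a b c : S1}
    (h : f b ∈ cArc (f c) (f a)) : b ∈ cArc a c := by
  rcases eq_or_ne a c with rfl | hac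
  · rw [cArc_self]; trivial
  by_contra hb
  have hb' : b ∈ oArc c a := by
    rcases eq_or_ne b a with rfl | h1
    · exact absurd (left_mem_cArc _ _) hb
    rcases eq_or_ne b c with rfl | h2
    · exact absurd (right_mem_cArc _ _) hb
    rcases oArc_trichotomy h1 h2 hac with h' | h'
    · exact absurd (oArc_subset_cArc hac h') hb
    · exact h'
  have := hf c b a hb'
  exact not_mem_cArc_of_swap (fun he : f c = f a => hac (f.injective he.symm)) this h

lemma orient_distinct_triple {f g : S1 ≃ₜ S1} {x y z : S1}
    (hxy : x ≠ y) (hyz : y ≠ z) (hxz : x ≠ z)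
    (hagree : f x = g x ∧ f y = g y ∧ f z = g z)
    (hf : OrientPres f) (hg : OrientRev g) : False := by
  have tri : y ∈ oArc x z ∨ y ∈ oArc z x := oArc_trichotomy hxy.symm hyz hxz
  rcases tri with h | h
  · have h1 := hf x y z h
    have h2 := hg x y z h
    rw [← hagree.1, ← hagree.2.1, ← hagree.2.2] at h2
    exact not_mem_oArc_both (fun he => hxz (f.injective he)) h1 h2
  · have h1 := hf z y x h
    have h2 := hg z y x h
    rw [← hagree.1, ← hagree.2.1, ← hagree.2.2] at h2
    exact not_mem_oArc_both (fun he => hxz (f.injective he).symm) h1 h2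

/-! ### gap basics -/

instance : LocallyConnectedSpace S1 := by
  rw [locallyConnectedSpace_iff_connected_subsets]
  intro x U hU
  induction x using QuotientAddGroup.induction_on with | _ r =>
  have hp : (prj ⁻¹' U) ∈ 𝓝 r := (AddCircle.continuous_mk' 1).continuousAt hU
  obtain ⟨ε, hε, hsub⟩ := Metric.mem_nhds_iff.mp hp
  refine ⟨prj '' Metric.ball r ε, ?_, ?_, ?_⟩
  · exact (QuotientAddGroup.isOpenMap_coe _ Metric.isOpen_ball).mem_nhds
      ⟨r, Metric.mem_ball_self hε, rfl⟩
  · rw [Real.ball_eq_Ioo]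
    exact isPreconnected_Ioo.image _ (AddCircle.continuous_mk' 1).continuousOn
  · exact Set.image_subset_iff.mpr hsub

lemma gap_isOpen {μ : Set S1} (hμ : IsClosed μ) (I : Gap μ) : IsOpen (I : Set S1) := by
  obtain ⟨x, _, heq⟩ := I.2
  rw [heq]
  exact hμ.isOpen_compl.connectedComponentIn

lemma gap_subset {μ : Set S1} (I : Gap μ) : (I : Set S1) ⊆ μᶜ := by
  obtain ⟨x, _, heq⟩ := I.2
  rw [heq]
  exact connectedComponentIn_subset _ _

lemma gap_nonempty {μ : Set S1} (I : Gap μ) : (I : Set S1).Nonempty := by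
  obtain ⟨x, hx, heq⟩ := I.2
  rw [heq]
  exact ⟨x, mem_connectedComponentIn hx⟩

lemma gap_eq_ccIn {μ : Set S1} (I : Gap μ) {x : S1} (hx : x ∈ (I : Set S1)) :
    (I : Set S1) = connectedComponentIn μᶜ x := by
  obtain ⟨y, hy, heq⟩ := I.2
  rw [heq] at hx ⊢
  exact connectedComponentIn_eq hx

lemma gap_isPreconnected {μ : Set S1} (I : Gap μ) : IsPreconnected (I : Set S1) := by
  obtain ⟨y, hy, heq⟩ := I.2
  rw [heq]
  exact isPreconnected_connectedComponentIn

lemma gap_eq_of_mem {μ : Set S1} {I J : Gap μ} {x : S1}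
    (hI : x ∈ (I : Set S1)) (hJ : x ∈ (J : Set S1)) : I = J :=
  Subtype.ext (by rw [gap_eq_ccIn I hI, gap_eq_ccIn J hJ])

section Main

variable {Γ : Type} [Group Γ] {P : OrbifoldPresentation Γ}
  {ρ : Γ →* (S1 ≃ₜ S1)} {μ : Set S1} {k : ℕ} {T : TauData μ k}
  {σg : Γ →* Equiv.Perm (Gap μ)} {I₀ : Gap μ} {i : Fin P.q}
  {f₀ g₀ φ₀ : S1 → S1} {ρ'₁ ρ'₂ : Γ →* (S1 ≃ₜ S1)}

lemma mem_gapOrbit_iff {x : S1} :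
    x ∈ gapOrbit σg I₀ ↔ ∃ γ : Γ, x ∈ ((σg γ I₀ : Gap μ) : Set S1) :=
  Set.mem_iUnion

lemma gapOrbit_subset : gapOrbit σg I₀ ⊆ μᶜ :=
  Set.iUnion_subset fun γ => gap_subset _

lemma mu_not_mem_gapOrbit {x : S1} (hx : x ∈ μ) : x ∉ gapOrbit σg I₀ :=
  fun h => gapOrbit_subset h hx

lemma gapOrbit_isOpen (hμ : IsClosed μ) : IsOpen (gapOrbit σg I₀) :=
  isOpen_iUnion fun γ => gap_isOpen hμ _

lemma jset_subset_gapOrbit (γ : Γ) : ((σg γ I₀ : Gap μ) : Set S1) ⊆ gapOrbit σg I₀ :=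
  Set.subset_iUnion (fun γ : Γ => ((σg γ I₀ : Gap μ) : Set S1)) γ

/-! ### stabilizer facts -/

lemma stab_zpow (hstab : gapStab σg I₀ = Subgroup.zpowers (P.c i)) (n : ℤ) :
    σg ((P.c i) ^ n) I₀ = I₀ := by
  have h : (P.c i) ^ n ∈ gapStab σg I₀ := by
    rw [hstab]
    exact zpow_mem (Subgroup.mem_zpowers _) n
  exact h

lemma jset_eq₁ (h₁ : IsModification ρ ρ'₁ μ k T σg I₀ (P.c i) f₀) (γ : Γ) :
    ((σg γ I₀ : Gap μ) : Set S1) = ρ'₁ γ '' (I₀ : Set S1) :=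
  h₁.rep'.gapAct γ I₀

lemma jset_eq₂ (h₂ : IsModification ρ ρ'₂ μ k T σg I₀ (P.c i) g₀) (γ : Γ) :
    ((σg γ I₀ : Gap μ) : Set S1) = ρ'₂ γ '' (I₀ : Set S1) :=
  h₂.rep'.gapAct γ I₀

lemma mem_I₀_zpow₁ (h₁ : IsModification ρ ρ'₁ μ k T σg I₀ (P.c i) f₀)
    (hstab : gapStab σg I₀ = Subgroup.zpowers (P.c i)) (n : ℤ) {x : S1}
    (hx : x ∈ (I₀ : Set S1)) : ρ'₁ ((P.c i) ^ n) x ∈ (I₀ : Set S1) := by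
  have h := jset_eq₁ h₁ ((P.c i) ^ n)
  rw [stab_zpow hstab n] at h
  rw [h]
  exact Set.mem_image_of_mem _ hx

lemma mem_I₀_pow₁ (h₁ : IsModification ρ ρ'₁ μ k T σg I₀ (P.c i) f₀)
    (hstab : gapStab σg I₀ = Subgroup.zpowers (P.c i)) (n : ℕ) {x : S1}
    (hx : x ∈ (I₀ : Set S1)) : ρ'₁ ((P.c i) ^ n) x ∈ (I₀ : Set S1) := by
  have := mem_I₀_zpow₁ h₁ hstab (n : ℤ) hx
  rwa [zpow_natCast] at this

/-! ### the semiconjugacy on powers of the stabilizer generator -/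

lemma semiconj_pow (h₁ : IsModification ρ ρ'₁ μ k T σg I₀ (P.c i) f₀)
    (h₂ : IsModification ρ ρ'₂ μ k T σg I₀ (P.c i) g₀)
    (hstab : gapStab σg I₀ = Subgroup.zpowers (P.c i))
    (hφ₀maps : Set.MapsTo φ₀ (I₀ : Set S1) (I₀ : Set S1))
    (hsemiconj : ∀ x ∈ (I₀ : Set S1), g₀ (φ₀ x) = φ₀ (f₀ x)) (n : ℕ) :
    ∀ x ∈ (I₀ : Set S1), ρ'₂ ((P.c i) ^ n) (φ₀ x) = φ₀ (ρ'₁ ((P.c i) ^ n) x) := by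
  induction n with
  | zero => intro x _; simp [homeo_one_apply]
  | succ n ih =>
      intro x hx
      have hcx : ρ'₁ (P.c i) x ∈ (I₀ : Set S1) := by
        have := mem_I₀_pow₁ h₁ hstab 1 hx
        rwa [pow_one] at this
      calc ρ'₂ ((P.c i) ^ (n + 1)) (φ₀ x)
          = ρ'₂ ((P.c i) ^ n) (ρ'₂ (P.c i) (φ₀ x)) := by
            rw [pow_succ, map_mul, homeo_mul_apply]
        _ = ρ'₂ ((P.c i) ^ n) (φ₀ (ρ'₁ (P.c i) x)) := by
            rw [h₂.on_gap (φ₀ x) (hφ₀maps hx), hsemiconj x hx, h₁.on_gap x hx]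
        _ = φ₀ (ρ'₁ ((P.c i) ^ n) (ρ'₁ (P.c i) x)) := ih _ hcx
        _ = φ₀ (ρ'₁ ((P.c i) ^ (n + 1)) x) := by
            rw [pow_succ, map_mul, homeo_mul_apply]

lemma semiconj_zpow (h₁ : IsModification ρ ρ'₁ μ k T σg I₀ (P.c i) f₀)
    (h₂ : IsModification ρ ρ'₂ μ k T σg I₀ (P.c i) g₀)
    (hstab : gapStab σg I₀ = Subgroup.zpowers (P.c i))
    (hφ₀maps : Set.MapsTo φ₀ (I₀ : Set S1) (I₀ : Set S1))
    (hsemiconj : ∀ x ∈ (I₀ : Set S1), g₀ (φ₀ x) = φ₀ (f₀ x)) (n : ℤ) :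
    ∀ x ∈ (I₀ : Set S1), ρ'₂ ((P.c i) ^ n) (φ₀ x) = φ₀ (ρ'₁ ((P.c i) ^ n) x) := by
  rcases n with m | m
  · intro x hx
    have := semiconj_pow h₁ h₂ hstab hφ₀maps hsemiconj m x hx
    simpa [zpow_natCast] using this
  · intro x hx
    set c := P.c i
    set N : ℤ := Int.negSucc m
    have hNn : -N = ((m + 1 : ℕ) : ℤ) := by simp [N, Int.negSucc_eq]
    set y := ρ'₁ (c ^ N) x with hy
    have hyI : y ∈ (I₀ : Set S1) := mem_I₀_zpow₁ h₁ hstab N hx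
    have key := semiconj_pow h₁ h₂ hstab hφ₀maps hsemiconj (m + 1) y hyI
    have h1 : ρ'₁ (c ^ (m + 1 : ℕ)) y = x := by
      rw [hy, ← homeo_mul_apply, ← map_mul, ← zpow_natCast, ← hNn, ← zpow_add, neg_add_cancel,
        zpow_zero, map_one, homeo_one_apply]
    rw [h1] at key
    have h2 : ρ'₂ (c ^ N) (ρ'₂ (c ^ (m + 1 : ℕ)) (φ₀ y)) = φ₀ y := by
      rw [← homeo_mul_apply, ← map_mul, ← zpow_natCast, ← hNn, ← zpow_add, add_neg_cancel,
        zpow_zero, map_one, homeo_one_apply]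
    rw [key] at h2
    exact h2

/-! ### the candidate map φ -/

/-- The global semiconjugacy: defined gap-by-gap via the given choice of `γ`. -/
noncomputable def phiFun' {Γ : Type} [Group Γ] {μ : Set S1} (σg : Γ →* Equiv.Perm (Gap μ))
    (I₀ : Gap μ) (ρ'₁ ρ'₂ : Γ →* (S1 ≃ₜ S1)) (φ₀ : S1 → S1) (x : S1) : S1 := by
  classical
  exact if h : ∃ γ : Γ, x ∈ ((σg γ I₀ : Gap μ) : Set S1) then
    ρ'₂ h.choose (φ₀ (ρ'₁ h.choose⁻¹ x)) else x

lemma val_indep (h₁ : IsModification ρ ρ'₁ μ k T σg I₀ (P.c i) f₀)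
    (h₂ : IsModification ρ ρ'₂ μ k T σg I₀ (P.c i) g₀)
    (hstab : gapStab σg I₀ = Subgroup.zpowers (P.c i))
    (hφ₀maps : Set.MapsTo φ₀ (I₀ : Set S1) (I₀ : Set S1))
    (hsemiconj : ∀ x ∈ (I₀ : Set S1), g₀ (φ₀ x) = φ₀ (f₀ x))
    {γ δ : Γ} {x : S1} (hγ : x ∈ ((σg γ I₀ : Gap μ) : Set S1))
    (hδ : x ∈ ((σg δ I₀ : Gap μ) : Set S1)) :
    ρ'₂ γ (φ₀ (ρ'₁ γ⁻¹ x)) = ρ'₂ δ (φ₀ (ρ'₁ δ⁻¹ x)) := by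
  have hgap : σg γ I₀ = σg δ I₀ := gap_eq_of_mem hγ hδ
  have hmem : δ⁻¹ * γ ∈ gapStab σg I₀ := by
    show σg (δ⁻¹ * γ) I₀ = I₀
    rw [map_mul, Equiv.Perm.mul_apply, hgap, ← Equiv.Perm.mul_apply, ← map_mul,
      inv_mul_cancel, map_one, Equiv.Perm.one_apply]
  rw [hstab] at hmem
  obtain ⟨n, hn⟩ := Subgroup.mem_zpowers_iff.mp hmem
  have hu : ρ'₁ γ⁻¹ x ∈ (I₀ : Set S1) := by
    rw [jset_eq₁ h₁] at hγ
    obtain ⟨u, hu, rfl⟩ := hγ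
    rwa [rep_inv_apply]
  have hv : ρ'₁ δ⁻¹ x = ρ'₁ ((P.c i) ^ n) (ρ'₁ γ⁻¹ x) := by
    rw [← homeo_mul_apply, ← map_mul, hn]
    congr 1
    group
  rw [hv, ← semiconj_zpow h₁ h₂ hstab hφ₀maps hsemiconj n _ hu,
    ← homeo_mul_apply, ← map_mul, hn]
  congr 2
  group

lemma phi_valueAt (h₁ : IsModification ρ ρ'₁ μ k T σg I₀ (P.c i) f₀)
    (h₂ : IsModification ρ ρ'₂ μ k T σg I₀ (P.c i) g₀)
    (hstab : gapStab σg I₀ = Subgroup.zpowers (P.c i))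
    (hφ₀maps : Set.MapsTo φ₀ (I₀ : Set S1) (I₀ : Set S1))
    (hsemiconj : ∀ x ∈ (I₀ : Set S1), g₀ (φ₀ x) = φ₀ (f₀ x))
    {γ : Γ} {x : S1} (hγ : x ∈ ((σg γ I₀ : Gap μ) : Set S1)) :
    phiFun' σg I₀ ρ'₁ ρ'₂ φ₀ x = ρ'₂ γ (φ₀ (ρ'₁ γ⁻¹ x)) := by
  have h : ∃ γ' : Γ, x ∈ ((σg γ' I₀ : Gap μ) : Set S1) := ⟨γ, hγ⟩
  rw [phiFun']
  rw [dif_pos h]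
  exact val_indep h₁ h₂ hstab hφ₀maps hsemiconj h.choose_spec hγ

lemma phi_off {x : S1} (hx : x ∉ gapOrbit σg I₀) :
    phiFun' σg I₀ ρ'₁ ρ'₂ φ₀ x = x := by
  rw [phiFun']
  rw [dif_neg]
  exact fun h => hx (mem_gapOrbit_iff.mpr h)

lemma phi_on_I₀ (h₁ : IsModification ρ ρ'₁ μ k T σg I₀ (P.c i) f₀)
    (h₂ : IsModification ρ ρ'₂ μ k T σg I₀ (P.c i) g₀)
    (hstab : gapStab σg I₀ = Subgroup.zpowers (P.c i))
    (hφ₀maps : Set.MapsTo φ₀ (I₀ : Set S1) (I₀ : Set S1))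
    (hsemiconj : ∀ x ∈ (I₀ : Set S1), g₀ (φ₀ x) = φ₀ (f₀ x))
    {x : S1} (hx : x ∈ (I₀ : Set S1)) :
    phiFun' σg I₀ ρ'₁ ρ'₂ φ₀ x = φ₀ x := by
  have h1 : x ∈ ((σg (1:Γ) I₀ : Gap μ) : Set S1) := by
    rw [map_one]; exact hx
  rw [phi_valueAt h₁ h₂ hstab hφ₀maps hsemiconj h1, inv_one, map_one, map_one,
    homeo_one_apply, homeo_one_apply]

lemma phi_mapsTo (h₁ : IsModification ρ ρ'₁ μ k T σg I₀ (P.c i) f₀)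
    (h₂ : IsModification ρ ρ'₂ μ k T σg I₀ (P.c i) g₀)
    (hstab : gapStab σg I₀ = Subgroup.zpowers (P.c i))
    (hφ₀maps : Set.MapsTo φ₀ (I₀ : Set S1) (I₀ : Set S1))
    (hsemiconj : ∀ x ∈ (I₀ : Set S1), g₀ (φ₀ x) = φ₀ (f₀ x))
    {γ : Γ} {x : S1} (hγ : x ∈ ((σg γ I₀ : Gap μ) : Set S1)) :
    phiFun' σg I₀ ρ'₁ ρ'₂ φ₀ x ∈ ((σg γ I₀ : Gap μ) : Set S1) := by
  rw [phi_valueAt h₁ h₂ hstab hφ₀maps hsemiconj hγ, jset_eq₂ h₂]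
  have hu : ρ'₁ γ⁻¹ x ∈ (I₀ : Set S1) := by
    rw [jset_eq₁ h₁] at hγ
    obtain ⟨u, hu, rfl⟩ := hγ
    rwa [rep_inv_apply]
  exact Set.mem_image_of_mem _ (hφ₀maps hu)

lemma phi_surjOn (h₁ : IsModification ρ ρ'₁ μ k T σg I₀ (P.c i) f₀)
    (h₂ : IsModification ρ ρ'₂ μ k T σg I₀ (P.c i) g₀)
    (hstab : gapStab σg I₀ = Subgroup.zpowers (P.c i))
    (hφ₀maps : Set.MapsTo φ₀ (I₀ : Set S1) (I₀ : Set S1))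
    (hφ₀surj : Set.SurjOn φ₀ (I₀ : Set S1) (I₀ : Set S1))
    (hsemiconj : ∀ x ∈ (I₀ : Set S1), g₀ (φ₀ x) = φ₀ (f₀ x))
    {γ : Γ} {y : S1} (hy : y ∈ ((σg γ I₀ : Gap μ) : Set S1)) :
    ∃ x ∈ ((σg γ I₀ : Gap μ) : Set S1), phiFun' σg I₀ ρ'₁ ρ'₂ φ₀ x = y := by
  rw [jset_eq₂ h₂] at hy
  obtain ⟨z, hz, rfl⟩ := hy
  obtain ⟨w, hw, rfl⟩ := hφ₀surj hz
  refine ⟨ρ'₁ γ w, ?_, ?_⟩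
  · rw [jset_eq₁ h₁]; exact Set.mem_image_of_mem _ hw
  · have hmem : ρ'₁ γ w ∈ ((σg γ I₀ : Gap μ) : Set S1) := by
      rw [jset_eq₁ h₁]; exact Set.mem_image_of_mem _ hw
    rw [phi_valueAt h₁ h₂ hstab hφ₀maps hsemiconj hmem, rep_inv_apply]

lemma phi_contOn (h₁ : IsModification ρ ρ'₁ μ k T σg I₀ (P.c i) f₀)
    (h₂ : IsModification ρ ρ'₂ μ k T σg I₀ (P.c i) g₀)
    (hstab : gapStab σg I₀ = Subgroup.zpowers (P.c i))
    (hφ₀maps : Set.MapsTo φ₀ (I₀ : Set S1) (I₀ : Set S1))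
    (hφ₀cont : ContinuousOn φ₀ (I₀ : Set S1))
    (hsemiconj : ∀ x ∈ (I₀ : Set S1), g₀ (φ₀ x) = φ₀ (f₀ x)) (γ : Γ) :
    ContinuousOn (phiFun' σg I₀ ρ'₁ ρ'₂ φ₀) ((σg γ I₀ : Gap μ) : Set S1) := by
  have hmaps : Set.MapsTo (ρ'₁ γ⁻¹) ((σg γ I₀ : Gap μ) : Set S1) (I₀ : Set S1) := by
    intro x hx
    rw [jset_eq₁ h₁] at hx
    obtain ⟨u, hu, rfl⟩ := hx
    rwa [rep_inv_apply]
  have hcont : ContinuousOn (fun x => ρ'₂ γ (φ₀ (ρ'₁ γ⁻¹ x)))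
      ((σg γ I₀ : Gap μ) : Set S1) := by
    apply (ρ'₂ γ).continuous.comp_continuousOn
    exact hφ₀cont.comp ((ρ'₁ γ⁻¹).continuous.continuousOn) hmaps
  exact hcont.congr fun x hx => phi_valueAt h₁ h₂ hstab hφ₀maps hsemiconj hx

/-! ### orientation coherence between the two modifications -/

lemma agree_on_mu (h₁ : IsModification ρ ρ'₁ μ k T σg I₀ (P.c i) f₀)
    (h₂ : IsModification ρ ρ'₂ μ k T σg I₀ (P.c i) g₀) (γ : Γ) {x : S1} (hx : x ∈ μ) :
    ρ'₁ γ x = ρ'₂ γ x := by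
  rw [h₁.eq_off γ x (mu_not_mem_gapOrbit hx), h₂.eq_off γ x (mu_not_mem_gapOrbit hx)]

lemma mu_triple (hrep : IsMTSRep ρ μ k T σg) :
    ∃ x y z : S1, x ∈ μ ∧ y ∈ μ ∧ z ∈ μ ∧ x ≠ y ∧ y ≠ z ∧ x ≠ z := by
  obtain ⟨x, hx⟩ := hrep.nonempty
  have hpp := preperfect_iff_nhds.mp hrep.perfect.acc
  obtain ⟨y, ⟨_, hyμ⟩, hyx⟩ := hpp x hx Set.univ Filter.univ_mem
  have hUy : ({y}ᶜ : Set S1) ∈ 𝓝 x :=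
    (isOpen_compl_singleton).mem_nhds (by simpa using (Ne.symm hyx))
  obtain ⟨z, ⟨hzy, hzμ⟩, hzx⟩ := hpp x hx {y}ᶜ hUy
  exact ⟨x, y, z, hx, hyμ, hzμ, Ne.symm hyx, fun h => hzy (by simp [h.symm]), Ne.symm hzx⟩

lemma same_orient (hrep : IsMTSRep ρ μ k T σg)
    (h₁ : IsModification ρ ρ'₁ μ k T σg I₀ (P.c i) f₀)
    (h₂ : IsModification ρ ρ'₂ μ k T σg I₀ (P.c i) g₀) (γ : Γ) :
    (OrientPres (ρ'₁ γ) ∧ OrientPres (ρ'₂ γ)) ∨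
      (OrientRev (ρ'₁ γ) ∧ OrientRev (ρ'₂ γ)) := by
  obtain ⟨x, y, z, hxμ, hyμ, hzμ, hxy, hyz, hxz⟩ := mu_triple hrep
  have hag : ρ'₁ γ x = ρ'₂ γ x ∧ ρ'₁ γ y = ρ'₂ γ y ∧ ρ'₁ γ z = ρ'₂ γ z :=
    ⟨agree_on_mu h₁ h₂ γ hxμ, agree_on_mu h₁ h₂ γ hyμ, agree_on_mu h₁ h₂ γ hzμ⟩
  rcases h₁.rep'.orient γ with hp1 | hr1 <;> rcases h₂.rep'.orient γ with hp2 | hr2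
  · exact Or.inl ⟨hp1, hp2⟩
  · exact absurd (orient_distinct_triple hxy hyz hxz hag hp1 hr2) id
  · have hag' : ρ'₂ γ x = ρ'₁ γ x ∧ ρ'₂ γ y = ρ'₁ γ y ∧ ρ'₂ γ z = ρ'₁ γ z :=
      ⟨hag.1.symm, hag.2.1.symm, hag.2.2.symm⟩
    exact absurd (orient_distinct_triple hxy hyz hxz hag' hp2 hr1) id
  · exact Or.inr ⟨hr1, hr2⟩

/-! ### per-gap weak monotonicity and equivariance of φ -/

lemma phi_mono3 (hrep : IsMTSRep ρ μ k T σg)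
    (h₁ : IsModification ρ ρ'₁ μ k T σg I₀ (P.c i) f₀)
    (h₂ : IsModification ρ ρ'₂ μ k T σg I₀ (P.c i) g₀)
    (hstab : gapStab σg I₀ = Subgroup.zpowers (P.c i))
    (hφ₀maps : Set.MapsTo φ₀ (I₀ : Set S1) (I₀ : Set S1))
    (hφ₀mono : ∀ x ∈ (I₀ : Set S1), ∀ y ∈ (I₀ : Set S1), ∀ z ∈ (I₀ : Set S1),
      y ∈ cArc x z → φ₀ y ∈ cArc (φ₀ x) (φ₀ z))
    (hsemiconj : ∀ x ∈ (I₀ : Set S1), g₀ (φ₀ x) = φ₀ (f₀ x))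
    {γ : Γ} {x y z : S1} (hx : x ∈ ((σg γ I₀ : Gap μ) : Set S1))
    (hy : y ∈ ((σg γ I₀ : Gap μ) : Set S1)) (hz : z ∈ ((σg γ I₀ : Gap μ) : Set S1))
    (h : y ∈ cArc x z) :
    phiFun' σg I₀ ρ'₁ ρ'₂ φ₀ y ∈
      cArc (phiFun' σg I₀ ρ'₁ ρ'₂ φ₀ x) (phiFun' σg I₀ ρ'₁ ρ'₂ φ₀ z) := by
  have hmem : ∀ {w : S1}, w ∈ ((σg γ I₀ : Gap μ) : Set S1) → ρ'₁ γ⁻¹ w ∈ (I₀ : Set S1) := by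
    intro w hw
    rw [jset_eq₁ h₁] at hw
    obtain ⟨u, hu, rfl⟩ := hw
    rwa [rep_inv_apply]
  set x₀ := ρ'₁ γ⁻¹ x with hx₀
  set y₀ := ρ'₁ γ⁻¹ y with hy₀
  set z₀ := ρ'₁ γ⁻¹ z with hz₀
  have hx₀I := hmem hx
  have hy₀I := hmem hy
  have hz₀I := hmem hz
  have hxb : ρ'₁ γ x₀ = x := rep_apply_inv ρ'₁ γ x
  have hyb : ρ'₁ γ y₀ = y := rep_apply_inv ρ'₁ γ y
  have hzb : ρ'₁ γ z₀ = z := rep_apply_inv ρ'₁ γ z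
  rw [phi_valueAt h₁ h₂ hstab hφ₀maps hsemiconj hx,
    phi_valueAt h₁ h₂ hstab hφ₀maps hsemiconj hy,
    phi_valueAt h₁ h₂ hstab hφ₀maps hsemiconj hz, ← hx₀, ← hy₀, ← hz₀]
  rw [← hxb, ← hyb, ← hzb] at h
  rcases same_orient hrep h₁ h₂ γ with ⟨hp1, hp2⟩ | ⟨hr1, hr2⟩
  · have h0 : y₀ ∈ cArc x₀ z₀ := orientPres_cArc_rev hp1 h
    exact orientPres_cArc hp2 (hφ₀mono x₀ hx₀I y₀ hy₀I z₀ hz₀I h0)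
  · have h0 : y₀ ∈ cArc z₀ x₀ := orientRev_cArc_rev hr1 h
    exact orientRev_cArc hr2 (hφ₀mono z₀ hz₀I y₀ hy₀I x₀ hx₀I h0)

lemma phi_equivariant (h₁ : IsModification ρ ρ'₁ μ k T σg I₀ (P.c i) f₀)
    (h₂ : IsModification ρ ρ'₂ μ k T σg I₀ (P.c i) g₀)
    (hstab : gapStab σg I₀ = Subgroup.zpowers (P.c i))
    (hφ₀maps : Set.MapsTo φ₀ (I₀ : Set S1) (I₀ : Set S1))
    (hsemiconj : ∀ x ∈ (I₀ : Set S1), g₀ (φ₀ x) = φ₀ (f₀ x)) (δ : Γ) (x : S1) :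
    phiFun' σg I₀ ρ'₁ ρ'₂ φ₀ (ρ'₁ δ x) = ρ'₂ δ (phiFun' σg I₀ ρ'₁ ρ'₂ φ₀ x) := by
  by_cases hx : x ∈ gapOrbit σg I₀
  · obtain ⟨γ, hγ⟩ := mem_gapOrbit_iff.mp hx
    have hδγ : ρ'₁ δ x ∈ ((σg (δ * γ) I₀ : Gap μ) : Set S1) := by
      rw [jset_eq₁ h₁, ← rep_image_image]
      exact Set.mem_image_of_mem _ ((jset_eq₁ h₁ γ) ▸ hγ)
    rw [phi_valueAt h₁ h₂ hstab hφ₀maps hsemiconj hδγ,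
      phi_valueAt h₁ h₂ hstab hφ₀maps hsemiconj hγ]
    have harg : ρ'₁ (δ * γ)⁻¹ (ρ'₁ δ x) = ρ'₁ γ⁻¹ x := by
      rw [← homeo_mul_apply, ← map_mul]
      congr 1
      group
    rw [harg, map_mul, homeo_mul_apply]
  · have hδx : ρ'₁ δ x ∉ gapOrbit σg I₀ := by
      intro hmem
      obtain ⟨γ, hγ⟩ := mem_gapOrbit_iff.mp hmem
      apply hx
      apply mem_gapOrbit_iff.mpr
      refine ⟨δ⁻¹ * γ, ?_⟩
      rw [jset_eq₁ h₁, ← rep_image_image]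
      have : x = ρ'₁ δ⁻¹ (ρ'₁ δ x) := (rep_inv_apply ρ'₁ δ x).symm
      rw [this]
      exact Set.mem_image_of_mem _ ((jset_eq₁ h₁ γ) ▸ hγ)
    rw [phi_off hδx, phi_off hx, h₁.eq_off δ x hx, h₂.eq_off δ x hx]

end Main

/-! ### lifts to the real line -/

lemma prj_add_one (t : ℝ) : prj (t + 1) = prj t := AddCircle.coe_add_period 1 t

lemma pos1_prj_sub {r1 r2 : ℝ} (h0 : 0 ≤ r2 - r1) (h1 : r2 - r1 < 1) :
    pos1 (prj r2 - prj r1) = r2 - r1 := by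
  rw [← prj_sub, pos1_coe, fract_self_of_mem h0 h1]

lemma fract_of_neg {x : ℝ} (h1 : -1 ≤ x) (h2 : x < 0) : Int.fract x = x + 1 := by
  rw [← Int.fract_add_one x]
  exact fract_self_of_mem (by linarith) (by linarith)

lemma prj_eq_iff_fract {r1 r2 : ℝ} : prj r1 = prj r2 ↔ Int.fract r1 = Int.fract r2 := by
  constructor
  · intro h
    rw [← pos1_coe r1, ← pos1_coe r2, h]
  · intro h
    have h2 : prj (Int.fract r1) = prj (Int.fract r2) := by rw [h]
    rwa [← pos1_coe r1, ← pos1_coe r2, coe_pos1, coe_pos1] at h2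

lemma prj_ne {r1 r2 : ℝ} (h1 : r1 < r2) (h2 : r2 < r1 + 1) : prj r1 ≠ prj r2 := by
  intro h
  have hf : Int.fract r1 = Int.fract r2 := prj_eq_iff_fract.mp h
  have hfl : r1 - ⌊r1⌋ = r2 - ⌊r2⌋ := by
    have := hf
    rw [Int.fract, Int.fract] at this
    linarith [this]
  set n : ℤ := ⌊r2⌋ - ⌊r1⌋ with hn
  have hcast : (n : ℝ) = r2 - r1 := by push_cast [hn]; linarith
  have hpos : (0:ℝ) < n := by rw [hcast]; linarith
  have hlt : (n:ℝ) < 1 := by rw [hcast]; linarith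
  have h1' : 0 < n := by exact_mod_cast hpos
  have h2' : n < 1 := by exact_mod_cast hlt
  omega

lemma exists_lift_Ioc (x : S1) (t : ℝ) : ∃ r : ℝ, r ∈ Set.Ioc (t - 1) t ∧ prj r = x := by
  refine ⟨t - pos1 (prj t - x), ⟨?_, ?_⟩, ?_⟩
  · have := pos1_lt_one (prj t - x); linarith
  · have := pos1_nonneg (prj t - x); linarith
  · rw [prj_sub, coe_pos1]; abel

lemma exists_lift_Ico (x : S1) (t : ℝ) : ∃ r : ℝ, r ∈ Set.Ico t (t + 1) ∧ prj r = x := by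
  refine ⟨t + pos1 (x - prj t), ⟨?_, ?_⟩, ?_⟩
  · have := pos1_nonneg (x - prj t); linarith
  · have := pos1_lt_one (x - prj t); linarith
  · rw [prj_add, coe_pos1]; abel

lemma continuousAt_pos1 {w : S1} (hw : w ≠ 0) : ContinuousAt pos1 w := by
  have h := AddCircle.continuousAt_equivIco (p := 1) 0 (x := w) (by simpa using hw)
  exact continuous_subtype_val.continuousAt.comp h

/-- The left endpoint of the component of `D` containing `t` (if `t ∈ D`). -/
noncomputable def AEnd (D : Set ℝ) (t : ℝ) : ℝ := sSup (Dᶜ ∩ Set.Iic t)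

/-- The right endpoint of the component of `D` containing `t` (if `t ∈ D`). -/
noncomputable def BEnd (D : Set ℝ) (t : ℝ) : ℝ := sInf (Dᶜ ∩ Set.Ici t)

/-- The lift of the global semiconjugacy to the real line. -/
noncomputable def PhiLift (f : S1 → S1) (D : Set ℝ) (t : ℝ) : ℝ := by
  classical
  exact if t ∈ D then AEnd D t + pos1 (f (prj t) - prj (AEnd D t)) else t

section Ends

variable {D : Set ℝ}

lemma AEnd_mem (hDo : IsOpen D) (hlo : ∀ t : ℝ, (Dᶜ ∩ Set.Iic t).Nonempty) (t : ℝ) :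
    AEnd D t ∈ Dᶜ ∩ Set.Iic t :=
  (hDo.isClosed_compl.inter isClosed_Iic).csSup_mem (hlo t) ⟨t, fun _ hr => hr.2⟩

lemma BEnd_mem (hDo : IsOpen D) (hhi : ∀ t : ℝ, (Dᶜ ∩ Set.Ici t).Nonempty) (t : ℝ) :
    BEnd D t ∈ Dᶜ ∩ Set.Ici t :=
  (hDo.isClosed_compl.inter isClosed_Ici).csInf_mem (hhi t) ⟨t, fun _ hr => hr.2⟩

lemma AEnd_lt (hDo : IsOpen D) (hlo : ∀ t : ℝ, (Dᶜ ∩ Set.Iic t).Nonempty)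
    {t : ℝ} (ht : t ∈ D) : AEnd D t < t := by
  rcases lt_or_eq_of_le (AEnd_mem hDo hlo t).2.out with h | h
  · exact h
  · exfalso; apply (AEnd_mem hDo hlo t).1; rw [h]; exact ht

lemma BEnd_gt (hDo : IsOpen D) (hhi : ∀ t : ℝ, (Dᶜ ∩ Set.Ici t).Nonempty)
    {t : ℝ} (ht : t ∈ D) : t < BEnd D t := by
  rcases lt_or_eq_of_le (BEnd_mem hDo hhi t).2.out with h | h
  · exact h
  · exfalso; apply (BEnd_mem hDo hhi t).1; rw [← h]; exact ht

lemma Ioo_subset_D (t : ℝ) : Set.Ioo (AEnd D t) (BEnd D t) ⊆ D := by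
  intro r hr
  by_contra hrD
  rcases le_total r t with h | h
  · exact absurd (le_csSup (s := Dᶜ ∩ Set.Iic t) ⟨t, fun _ hx => hx.2⟩ ⟨hrD, h⟩)
      (not_le.mpr hr.1)
  · exact absurd (csInf_le (s := Dᶜ ∩ Set.Ici t) ⟨t, fun _ hx => hx.2⟩ ⟨hrD, h⟩)
      (not_le.mpr hr.2)

lemma AEnd_congr (hDo : IsOpen D) (hlo : ∀ t : ℝ, (Dᶜ ∩ Set.Iic t).Nonempty)
    {t u : ℝ} (hu : u ∈ Set.Ioo (AEnd D t) (BEnd D t)) :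
    AEnd D u = AEnd D t := by
  apply le_antisymm
  · apply csSup_le (hlo u)
    intro r hr
    by_contra hgt
    push_neg at hgt
    have hrD : r ∈ D := Ioo_subset_D t ⟨hgt, lt_of_le_of_lt hr.2 hu.2⟩
    exact hr.1 hrD
  · exact le_csSup ⟨u, fun _ hx => hx.2⟩ ⟨(AEnd_mem hDo hlo t).1, hu.1.le⟩

lemma BEnd_congr (hDo : IsOpen D) (hhi : ∀ t : ℝ, (Dᶜ ∩ Set.Ici t).Nonempty)
    {t u : ℝ} (hu : u ∈ Set.Ioo (AEnd D t) (BEnd D t)) :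
    BEnd D u = BEnd D t := by
  apply le_antisymm
  · exact csInf_le ⟨u, fun _ hx => hx.2⟩ ⟨(BEnd_mem hDo hhi t).1, hu.2.le⟩
  · apply le_csInf (hhi u)
    intro r hr
    by_contra hgt
    push_neg at hgt
    have hrD : r ∈ D := Ioo_subset_D t ⟨lt_of_lt_of_le hu.1 hr.2, hgt⟩
    exact hr.1 hrD

lemma AEnd_period (hDo : IsOpen D) (hlo : ∀ t : ℝ, (Dᶜ ∩ Set.Iic t).Nonempty)
    (hper : ∀ r : ℝ, r + 1 ∈ D ↔ r ∈ D) (t : ℝ) :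
    AEnd D (t + 1) = AEnd D t + 1 := by
  apply le_antisymm
  · apply csSup_le (hlo (t + 1))
    intro r hr
    have hr1 : r - 1 ∈ Dᶜ ∩ Set.Iic t := by
      constructor
      · intro hmem
        exact hr.1 (by simpa using (hper (r - 1)).mpr hmem)
      · have := hr.2.out; simp only [Set.mem_Iic]; linarith
    have h3 : r - 1 ≤ AEnd D t := le_csSup (s := Dᶜ ∩ Set.Iic t) ⟨t, fun _ hx => hx.2⟩ hr1
    linarith
  · apply le_csSup ⟨t + 1, fun _ hx => hx.2⟩
    refine ⟨?_, ?_⟩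
    · intro hmem
      exact (AEnd_mem hDo hlo t).1 ((hper _).mp hmem)
    · have := (AEnd_mem hDo hlo t).2.out
      simp only [Set.mem_Iic]; linarith

end Ends

end Stmt3Aux

end PAFlow

open PAFlow in
/-- modifications by semi-conjugate gap maps are semi-conjugate, by a
continuous surjective weakly monotone degree-one map extending the given semi-conjugacy
on the gap and equal to the identity off the orbit `𝔍` of the gap. -/
theorem statement3 {Γ : Type} [Group Γ] (P : OrbifoldPresentation Γ)
    (ρ : Γ →* (S1 ≃ₜ S1)) (μ : Set S1) (k : ℕ)
    (T : TauData μ k) (σg : Γ →* Equiv.Perm (Gap μ))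
    (hrep : IsMTSRep ρ μ k T σg)
    (I₀ : Gap μ) (hper : gapStab σg I₀ ≠ ⊥)
    (i : Fin P.q) (hstab : gapStab σg I₀ = Subgroup.zpowers (P.c i))
    (f₀ g₀ : S1 → S1)
    (hf₀ : IsClosureHomeo f₀ (I₀ : Set S1)) (hg₀ : IsClosureHomeo g₀ (I₀ : Set S1))
    (hbdf : ∀ x ∈ frontier (I₀ : Set S1), f₀ x = ρ (P.c i) x)
    (hbdg : ∀ x ∈ frontier (I₀ : Set S1), g₀ x = ρ (P.c i) x)
    (φ₀ : S1 → S1)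
    (hφ₀cont : ContinuousOn φ₀ (I₀ : Set S1))
    (hφ₀maps : Set.MapsTo φ₀ (I₀ : Set S1) (I₀ : Set S1))
    (hφ₀surj : Set.SurjOn φ₀ (I₀ : Set S1) (I₀ : Set S1))
    (hφ₀mono : ∀ x ∈ (I₀ : Set S1), ∀ y ∈ (I₀ : Set S1), ∀ z ∈ (I₀ : Set S1),
      y ∈ cArc x z → φ₀ y ∈ cArc (φ₀ x) (φ₀ z))
    (hsemiconj : ∀ x ∈ (I₀ : Set S1), g₀ (φ₀ x) = φ₀ (f₀ x))
    (ρ'₁ ρ'₂ : Γ →* (S1 ≃ₜ S1))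
    (h₁ : IsModification ρ ρ'₁ μ k T σg I₀ (P.c i) f₀)
    (h₂ : IsModification ρ ρ'₂ μ k T σg I₀ (P.c i) g₀) :
    ∃ φ : S1 → S1,
      Continuous φ ∧ Function.Surjective φ ∧
      (∀ x y z : S1, y ∈ cArc x z → φ y ∈ cArc (φ x) (φ z)) ∧
      (∀ x ∈ (I₀ : Set S1), φ x = φ₀ x) ∧
      (∀ x : S1, x ∉ gapOrbit σg I₀ → φ x = x) ∧
      (∀ (γ : Γ) (x : S1), φ (ρ'₁ γ x) = ρ'₂ γ (φ x)) := by
  classical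
  set φ : S1 → S1 := phiFun' σg I₀ ρ'₁ ρ'₂ φ₀ with hφdef
  set D : Set ℝ := prj ⁻¹' (gapOrbit σg I₀) with hDdef
  have hμc : IsClosed μ := hrep.perfect.closed
  have hDo : IsOpen D := (gapOrbit_isOpen hμc).preimage (AddCircle.continuous_mk' 1)
  have hmemD : ∀ r : ℝ, r ∈ D ↔ prj r ∈ gapOrbit σg I₀ := fun r => Iff.rfl
  have hperD : ∀ r : ℝ, r + 1 ∈ D ↔ r ∈ D := by
    intro r
    rw [hmemD, hmemD, prj_add_one]
  obtain ⟨m₁, m₂, m₃, hm₁, hm₂, hm₃, h12, _, _⟩ := mu_triple hrep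
  have hlo : ∀ t : ℝ, (Dᶜ ∩ Set.Iic t).Nonempty := by
    intro t
    obtain ⟨r, hr, hrx⟩ := exists_lift_Ioc m₁ t
    exact ⟨r, fun hmem => (mu_not_mem_gapOrbit hm₁)
      (by rw [← hrx]; exact (hmemD r).mp hmem), hr.2⟩
  have hhi : ∀ t : ℝ, (Dᶜ ∩ Set.Ici t).Nonempty := by
    intro t
    obtain ⟨r, hr, hrx⟩ := exists_lift_Ico m₁ t
    exact ⟨r, fun hmem => (mu_not_mem_gapOrbit hm₁)
      (by rw [← hrx]; exact (hmemD r).mp hmem), hr.1⟩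
  have len_lt : ∀ t ∈ D, BEnd D t < AEnd D t + 1 := by
    intro t ht
    by_contra hge
    push_neg at hge
    have key : ∀ m : S1, m ∈ μ → m = prj (AEnd D t) := by
      intro m hm
      obtain ⟨r, hr, hrx⟩ := exists_lift_Ico m (AEnd D t)
      have hrD : r ∉ D := fun hmem => (mu_not_mem_gapOrbit hm)
        (by rw [← hrx]; exact (hmemD r).mp hmem)
      rcases lt_or_eq_of_le hr.1 with h | h
      · exact absurd (Ioo_subset_D t ⟨h, lt_of_lt_of_le hr.2 hge⟩) hrD
      · rw [← hrx, ← h]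
    exact h12 ((key m₁ hm₁).trans (key m₂ hm₂).symm)
  have hJmem : ∀ t : ℝ, t ∈ D → ∃ γ : Γ, prj t ∈ ((σg γ I₀ : Gap μ) : Set S1) :=
    fun t ht => mem_gapOrbit_iff.mp ht
  have gap_sub : ∀ t ∈ D, ∀ γ : Γ, prj t ∈ ((σg γ I₀ : Gap μ) : Set S1) →
      prj '' (Set.Ioo (AEnd D t) (BEnd D t)) ⊆ ((σg γ I₀ : Gap μ) : Set S1) := by
    intro t ht γ hγ
    have hpre : IsPreconnected (prj '' Set.Ioo (AEnd D t) (BEnd D t)) :=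
      isPreconnected_Ioo.image _ (AddCircle.continuous_mk' 1).continuousOn
    have hsubμ : prj '' Set.Ioo (AEnd D t) (BEnd D t) ⊆ μᶜ := by
      rintro y ⟨r, hr, rfl⟩
      exact gapOrbit_subset ((hmemD r).mp (Ioo_subset_D t hr))
    have hmem' : prj t ∈ prj '' Set.Ioo (AEnd D t) (BEnd D t) :=
      ⟨t, ⟨AEnd_lt hDo hlo ht, BEnd_gt hDo hhi ht⟩, rfl⟩
    rw [gap_eq_ccIn (σg γ I₀) hγ]
    exact hpre.subset_connectedComponentIn hmem' hsubμ
  have gap_sup : ∀ t ∈ D, ∀ γ : Γ, prj t ∈ ((σg γ I₀ : Gap μ) : Set S1) →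
      ((σg γ I₀ : Gap μ) : Set S1) ⊆ prj '' (Set.Ioo (AEnd D t) (BEnd D t)) := by
    intro t ht γ hγ w hw
    have hAD : AEnd D t ∉ D := (AEnd_mem hDo hlo t).1
    have hBD : BEnd D t ∉ D := (BEnd_mem hDo hhi t).1
    have hAB : AEnd D t < BEnd D t := (AEnd_lt hDo hlo ht).trans (BEnd_gt hDo hhi ht)
    have hBA1 : BEnd D t < AEnd D t + 1 := len_lt t ht
    set A := AEnd D t
    set B := BEnd D t
    have hU : IsOpen (prj '' Set.Ioo A B) := QuotientAddGroup.isOpenMap_coe _ isOpen_Ioo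
    have hV : IsOpen (prj '' Set.Ioo B (A + 1)) := QuotientAddGroup.isOpenMap_coe _ isOpen_Ioo
    have hcover : ((σg γ I₀ : Gap μ) : Set S1) ⊆ prj '' Set.Ioo A B ∪ prj '' Set.Ioo B (A + 1) := by
      intro y hy
      obtain ⟨r, hr, hrx⟩ := exists_lift_Ioc y (A + 1)
      have hrA : A < r := by have := hr.1; linarith
      have hyD : prj r ∈ gapOrbit σg I₀ := by rw [hrx]; exact jset_subset_gapOrbit γ hy
      have hne1 : r ≠ A + 1 := by
        rintro rfl
        rw [prj_add_one] at hyD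
        exact hAD hyD
      have hneB : r ≠ B := by rintro rfl; exact hBD hyD
      rcases lt_trichotomy r B with h | h | h
      · exact Or.inl ⟨r, ⟨hrA, h⟩, hrx⟩
      · exact absurd h hneB
      · exact Or.inr ⟨r, ⟨h, lt_of_le_of_ne hr.2 hne1⟩, hrx⟩
    have hdisj : ¬ (prj '' Set.Ioo A B ∩ prj '' Set.Ioo B (A + 1)).Nonempty := by
      rintro ⟨y, ⟨r1, hr1, hy1⟩, ⟨r2, hr2, hy2⟩⟩
      have h12' : r1 < r2 := hr1.2.trans hr2.1
      have h21 : r2 < r1 + 1 := by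
        have := hr1.1; have := hr2.2; linarith
      exact prj_ne h12' h21 (hy1.trans hy2.symm)
    by_contra hwU
    have hwV : w ∈ prj '' Set.Ioo B (A + 1) := (hcover hw).resolve_left hwU
    have hUne : (((σg γ I₀ : Gap μ) : Set S1) ∩ prj '' Set.Ioo A B).Nonempty :=
      ⟨prj t, hγ, ⟨t, ⟨AEnd_lt hDo hlo ht, BEnd_gt hDo hhi ht⟩, rfl⟩⟩
    have hVne : (((σg γ I₀ : Gap μ) : Set S1) ∩ prj '' Set.Ioo B (A + 1)).Nonempty :=
      ⟨w, hw, hwV⟩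
    obtain ⟨y, _, hyUV⟩ := gap_isPreconnected (σg γ I₀) _ _ hU hV hcover hUne hVne
    exact hdisj ⟨y, hyUV⟩
  -- basic facts about φ
  have hφoff : ∀ x : S1, x ∉ gapOrbit σg I₀ → φ x = x := fun x hx => phi_off hx
  have hφmaps : ∀ (γ : Γ) (x : S1), x ∈ ((σg γ I₀ : Gap μ) : Set S1) →
      φ x ∈ ((σg γ I₀ : Gap μ) : Set S1) :=
    fun γ x hx => phi_mapsTo h₁ h₂ hstab hφ₀maps hsemiconj hx
  have hφcontOn : ∀ γ : Γ, ContinuousOn φ ((σg γ I₀ : Gap μ) : Set S1) :=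
    fun γ => phi_contOn h₁ h₂ hstab hφ₀maps hφ₀cont hsemiconj γ
  have hφm3 : ∀ (γ : Γ) (x y z : S1), x ∈ ((σg γ I₀ : Gap μ) : Set S1) →
      y ∈ ((σg γ I₀ : Gap μ) : Set S1) → z ∈ ((σg γ I₀ : Gap μ) : Set S1) →
      y ∈ cArc x z → φ y ∈ cArc (φ x) (φ z) :=
    fun γ x y z hx hy hz h =>
      phi_mono3 hrep h₁ h₂ hstab hφ₀maps hφ₀mono hsemiconj hx hy hz h
  have hφsurjOn : ∀ (γ : Γ) (y : S1), y ∈ ((σg γ I₀ : Gap μ) : Set S1) →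
      ∃ x ∈ ((σg γ I₀ : Gap μ) : Set S1), φ x = y :=
    fun γ y hy => phi_surjOn h₁ h₂ hstab hφ₀maps hφ₀surj hsemiconj hy
  -- PhiLift basics
  have philift_def_on : ∀ t ∈ D, PhiLift φ D t = AEnd D t + pos1 (φ (prj t) - prj (AEnd D t)) := by
    intro t ht
    rw [PhiLift]
    rw [if_pos ht]
  have philift_off : ∀ t ∉ D, PhiLift φ D t = t := by
    intro t ht
    rw [PhiLift]
    rw [if_neg ht]
  have philift_proj : ∀ t : ℝ, prj (PhiLift φ D t) = φ (prj t) := by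
    intro t
    by_cases ht : t ∈ D
    · rw [philift_def_on t ht, prj_add, coe_pos1]
      abel
    · rw [philift_off t ht, hφoff (prj t) (fun h => ht ((hmemD t).mpr h))]
  have philift_mem : ∀ t ∈ D, PhiLift φ D t ∈ Set.Ioo (AEnd D t) (BEnd D t) := by
    intro t ht
    obtain ⟨γ, hγ⟩ := hJmem t ht
    obtain ⟨r, hr, hrx⟩ := gap_sup t ht γ hγ (hφmaps γ (prj t) hγ)
    have heq : PhiLift φ D t = r := by
      rw [philift_def_on t ht, ← hrx,
        pos1_prj_sub (by linarith [hr.1]) (by linarith [hr.2, len_lt t ht])]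
      ring
    rw [heq]; exact hr
  -- monotonicity of the lift
  have philift_mono : Monotone (PhiLift φ D) := by
    intro s t hst
    by_cases hs : s ∈ D <;> by_cases ht : t ∈ D
    · -- both in D
      rcases eq_or_lt_of_le hst with rfl | hlt
      · exact le_refl _
      by_cases hcomp : t < BEnd D s
      · -- same component
        have htIoo : t ∈ Set.Ioo (AEnd D s) (BEnd D s) :=
          ⟨(AEnd_lt hDo hlo hs).trans hlt, hcomp⟩
        have hAt : AEnd D t = AEnd D s := AEnd_congr hDo hlo htIoo
        obtain ⟨γ, hγ⟩ := hJmem s hs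
        have hsub' : Set.Icc s t ⊆ Set.Ioo (AEnd D s) (BEnd D s) := fun r hr =>
          ⟨(AEnd_lt hDo hlo hs).trans_le hr.1, lt_of_le_of_lt hr.2 hcomp⟩
        have hmapsJ : ∀ r ∈ Set.Icc s t, prj r ∈ ((σg γ I₀ : Gap μ) : Set S1) :=
          fun r hr => gap_sub s hs γ hγ ⟨r, hsub' hr, rfl⟩
        rw [philift_def_on s hs, philift_def_on t ht, hAt]
        have hsuff : pos1 (φ (prj s) - prj (AEnd D s)) ≤ pos1 (φ (prj t) - prj (AEnd D s)) := by
          by_contra hltF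
          push_neg at hltF
          have hprjA_not : prj (AEnd D s) ∉ gapOrbit σg I₀ :=
            fun h => (AEnd_mem hDo hlo s).1 ((hmemD _).mpr h)
          have hφne : ∀ r ∈ Set.Icc s t, φ (prj r) ≠ prj (AEnd D s) := fun r hr he =>
            hprjA_not (he ▸ jset_subset_gapOrbit γ (hφmaps γ (prj r) (hmapsJ r hr)))
          have h1c : ContinuousOn (fun r : ℝ => φ (prj r)) (Set.Icc s t) :=
            ContinuousOn.comp (hφcontOn γ)
              (AddCircle.continuous_mk' 1).continuousOn (fun r hr => hmapsJ r hr)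
          have hFcont : ContinuousOn (fun r : ℝ => pos1 (φ (prj r) - prj (AEnd D s)))
              (Set.Icc s t) := by
            intro r hr
            have hne0 : φ (prj r) - prj (AEnd D s) ≠ 0 := sub_ne_zero.mpr (hφne r hr)
            have hsubc : ContinuousAt (fun y : S1 => y - prj (AEnd D s)) (φ (prj r)) :=
              (Continuous.continuousAt
                (show Continuous (fun y : S1 => y - prj (AEnd D s)) from
                  continuous_id.sub continuous_const))
            have houter : ContinuousAt (pos1 ∘ (fun y : S1 => y - prj (AEnd D s)))
                (φ (prj r)) := ContinuousAt.comp (continuousAt_pos1 hne0) hsubc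
            have hres := ContinuousAt.comp_continuousWithinAt (x := r) houter (h1c r hr)
            exact hres
          set Fs : ℝ := pos1 (φ (prj s) - prj (AEnd D s)) with hFs
          set Ft : ℝ := pos1 (φ (prj t) - prj (AEnd D s)) with hFt
          set c : ℝ := (Ft + Fs) / 2 with hc
          have hcFt : Ft < c := by rw [hc]; linarith
          have hcFs : c < Fs := by rw [hc]; linarith
          have hcmem : c ∈ Set.Icc Ft Fs := ⟨hcFt.le, hcFs.le⟩
          obtain ⟨y, hyIcc, hyc⟩ := intermediate_value_Icc' hlt.le hFcont hcmem
          have hys : s < y := by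
            rcases lt_or_eq_of_le hyIcc.1 with h | h
            · exact h
            · exfalso
              rw [← h] at hyc
              have hyc2 : Fs = c := hyc
              exact absurd hyc2 hcFs.ne'
          have hyt : y < t := by
            rcases lt_or_eq_of_le hyIcc.2 with h | h
            · exact h
            · exfalso
              rw [h] at hyc
              have hyc2 : Ft = c := hyc
              exact absurd hyc2 hcFt.ne
          have hst_ne : prj s ≠ prj t := by
            have h1 := (hsub' ⟨le_refl s, hlt.le⟩).1
            have h2 := (hsub' ⟨hlt.le, le_refl t⟩).2
            exact prj_ne hlt (by linarith [len_lt s hs])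
          have harc : prj y ∈ cArc (prj s) (prj t) := by
            rw [mem_cArc_iff hst_ne,
              pos1_prj_sub (by linarith) (by linarith [len_lt s hs,
                (hsub' ⟨le_refl s, hlt.le⟩).1, (hsub' ⟨hlt.le, le_refl t⟩).2]),
              pos1_prj_sub (by linarith) (by linarith [len_lt s hs,
                (hsub' ⟨le_refl s, hlt.le⟩).1, (hsub' ⟨hlt.le, le_refl t⟩).2])]
            linarith
          have h3 := hφm3 γ (prj s) (prj y) (prj t)
            (hmapsJ s ⟨le_refl s, hlt.le⟩) (hmapsJ y hyIcc) (hmapsJ t ⟨hlt.le, le_refl t⟩) harc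
          have hPsPt : φ (prj s) ≠ φ (prj t) := by
            intro he
            rw [hFs, hFt, he] at hltF
            exact absurd hltF (lt_irrefl _)
          rw [mem_cArc_iff hPsPt] at h3
          have e1 : φ (prj y) - φ (prj s) =
              (φ (prj y) - prj (AEnd D s)) - (φ (prj s) - prj (AEnd D s)) := by abel
          have e2 : φ (prj t) - φ (prj s) =
              (φ (prj t) - prj (AEnd D s)) - (φ (prj s) - prj (AEnd D s)) := by abel
          rw [e1, e2,
            pos1_sub (φ (prj y) - prj (AEnd D s)) (φ (prj s) - prj (AEnd D s)),
            pos1_sub (φ (prj t) - prj (AEnd D s)) (φ (prj s) - prj (AEnd D s))] at h3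
          have hyc' : pos1 (φ (prj y) - prj (AEnd D s)) = c := hyc
          rw [hyc', ← hFs, ← hFt] at h3
          have hFs1 : Fs < 1 := pos1_lt_one _
          have hFt0 : 0 ≤ Ft := pos1_nonneg _
          have hb1 : Int.fract (c - Fs) = c - Fs + 1 :=
            fract_of_neg (by linarith) (by linarith)
          have hb2 : Int.fract (Ft - Fs) = Ft - Fs + 1 :=
            fract_of_neg (by linarith) (by linarith)
          rw [hb1, hb2] at h3
          linarith
        linarith
      · -- different components
        push_neg at hcomp
        have h1 := (philift_mem s hs).2
        have h2 := (philift_mem t ht).1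
        have h3 : BEnd D s ≤ AEnd D t :=
          le_csSup (s := Dᶜ ∩ Set.Iic t) ⟨t, fun _ hx => hx.2⟩
            ⟨(BEnd_mem hDo hhi s).1, hcomp⟩
        linarith
    · have h1 := (philift_mem s hs).2
      have h2 : BEnd D s ≤ t :=
        csInf_le (s := Dᶜ ∩ Set.Ici s) ⟨s, fun _ hx => hx.2⟩ ⟨ht, hst⟩
      rw [philift_off t ht]
      linarith
    · have h2 := (philift_mem t ht).1
      have h3 : s ≤ AEnd D t :=
        le_csSup (s := Dᶜ ∩ Set.Iic t) ⟨t, fun _ hx => hx.2⟩ ⟨hs, hst⟩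
      rw [philift_off s hs]
      linarith
    · rw [philift_off s hs, philift_off t ht]
      exact hst
  -- surjectivity of the lift
  have philift_surj : Function.Surjective (PhiLift φ D) := by
    intro v
    by_cases hv : v ∈ D
    · obtain ⟨γ, hγ⟩ := hJmem v hv
      obtain ⟨x, hxJ, hxv⟩ := hφsurjOn γ (prj v) hγ
      obtain ⟨u, huIoo, hux⟩ := gap_sup v hv γ hγ hxJ
      have huD : u ∈ D := Ioo_subset_D v huIoo
      have hAu : AEnd D u = AEnd D v := AEnd_congr hDo hlo huIoo
      refine ⟨u, ?_⟩
      rw [philift_def_on u huD, hAu, hux, hxv,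
        pos1_prj_sub (by linarith [AEnd_lt hDo hlo hv])
          (by linarith [BEnd_gt hDo hhi hv, len_lt v hv])]
      ring
    · exact ⟨v, philift_off v hv⟩
  -- periodicity of the lift
  have philift_period : ∀ t : ℝ, PhiLift φ D (t + 1) = PhiLift φ D t + 1 := by
    intro t
    by_cases ht : t ∈ D
    · have ht1 : t + 1 ∈ D := (hperD t).mpr ht
      rw [philift_def_on _ ht1, philift_def_on _ ht, AEnd_period hDo hlo hperD t,
        prj_add_one, prj_add_one]
      ring
    · have ht1 : t + 1 ∉ D := fun h => ht ((hperD t).mp h)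
      rw [philift_off _ ht1, philift_off _ ht]
  have hcontΦ : Continuous (PhiLift φ D) :=
    philift_mono.continuous_of_surjective philift_surj
  -- continuity of φ
  have hφcont : Continuous φ := by
    have hcomp : Continuous (fun r : ℝ => φ (prj r)) := by
      have he : (fun r : ℝ => φ (prj r)) = fun r : ℝ => prj (PhiLift φ D r) :=
        funext fun r => (philift_proj r).symm
      rw [he]
      exact (AddCircle.continuous_mk' 1).comp hcontΦ
    exact (QuotientAddGroup.isQuotientMap_mk _).continuous_iff.mpr hcomp
  -- surjectivity of φ
  have hφsurj : Function.Surjective φ := by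
    intro y
    obtain ⟨r0, _, hr0⟩ := exists_lift_Ico y 0
    obtain ⟨t, htv⟩ := philift_surj r0
    exact ⟨prj t, by rw [← philift_proj, htv, hr0]⟩
  -- weak monotonicity of φ
  have hφmono : ∀ x y z : S1, y ∈ cArc x z → φ y ∈ cArc (φ x) (φ z) := by
    intro x y z hy
    rcases eq_or_ne x z with rfl | hxz
    · rw [cArc_self]; trivial
    set X : ℝ := pos1 x with hXdef
    set Y : ℝ := X + pos1 (y - x) with hYdef
    set Z : ℝ := X + pos1 (z - x) with hZdef
    have hXp : prj X = x := coe_pos1 x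
    have hYp : prj Y = y := by rw [hYdef, hXdef, prj_add, coe_pos1, coe_pos1]; abel
    have hZp : prj Z = z := by rw [hZdef, hXdef, prj_add, coe_pos1, coe_pos1]; abel
    have h1 : X ≤ Y := le_add_of_nonneg_right (pos1_nonneg _)
    have h2 : Y ≤ Z := by
      have := (mem_cArc_iff hxz).mp hy
      rw [hYdef, hZdef]
      linarith
    have h3 : Z ≤ X + 1 := by
      rw [hZdef]
      linarith [pos1_lt_one (z - x)]
    have m1 : PhiLift φ D X ≤ PhiLift φ D Y := philift_mono h1
    have m2 : PhiLift φ D Y ≤ PhiLift φ D Z := philift_mono h2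
    have m3 : PhiLift φ D Z ≤ PhiLift φ D X + 1 := by
      have := philift_mono h3
      rwa [philift_period X] at this
    have hφx : φ x = prj (PhiLift φ D X) := by rw [philift_proj, hXp]
    have hφy : φ y = prj (PhiLift φ D Y) := by rw [philift_proj, hYp]
    have hφz : φ z = prj (PhiLift φ D Z) := by rw [philift_proj, hZp]
    rcases eq_or_ne (φ x) (φ z) with he | hne
    · rw [← he, cArc_self]; trivial
    rw [mem_cArc_iff hne]
    have hdz0 : PhiLift φ D Z - PhiLift φ D X ≠ 0 := by
      intro h
      apply hne
      rw [hφx, hφz, sub_eq_zero.mp h]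
    have hdz1 : PhiLift φ D Z - PhiLift φ D X ≠ 1 := by
      intro h
      apply hne
      have : PhiLift φ D Z = PhiLift φ D X + 1 := by linarith
      rw [hφx, hφz, this, prj_add_one]
    have e1 : φ y - φ x = prj (PhiLift φ D Y - PhiLift φ D X) := by
      rw [prj_sub, hφx, hφy]
    have e2 : φ z - φ x = prj (PhiLift φ D Z - PhiLift φ D X) := by
      rw [prj_sub, hφx, hφz]
    have hzlt : PhiLift φ D Z - PhiLift φ D X < 1 :=
      lt_of_le_of_ne (by linarith) hdz1
    have hzpos : 0 < PhiLift φ D Z - PhiLift φ D X :=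
      lt_of_le_of_ne (by linarith) (Ne.symm hdz0)
    rw [e1, e2, pos1_coe, pos1_coe,
      fract_self_of_mem (by linarith) (by linarith),
      fract_self_of_mem (by linarith) (by linarith)]
    linarith
  refine ⟨φ, hφcont, hφsurj, hφmono, ?_, ?_, ?_⟩
  · intro x hx
    exact phi_on_I₀ h₁ h₂ hstab hφ₀maps hsemiconj hx
  · intro x hx
    exact hφoff x hx
  · intro γ x
    exact phi_equivariant h₁ h₂ hstab hφ₀maps hsemiconj γ x
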